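/- For every real number β with 0 < β ≤ 1 and every real number ε with 0 < ε < 1/2, there exist positive integers d and n₀ and a real number α > 0 such that: for every integer n ≥ n₀ for which β·n is an integer, there exists a left d-regular bipartite graph with left vertex set L of size n and right vertex set R of size β·n — formally, a function assigning to each left vertex an ordered d-tuple of right vertices (parallel edges allowed) — such that every subset S ⊆ L with |S| ≤ α·n has at least (1 − ε)·d·|S| distinct neighbors in R (the neighbors of S being all right vertices occurring in the tuple of some vertex of S). -/

import Mathlib

lemma pow_self_le (s : ℕ) : (s:ℝ)^s ≤ Real.exp 1 ^ s * s.factorial := by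
  induction s with
  | zero => simp
  | succ k ih =>
    have hE : (1:ℝ) ≤ Real.exp 1 := Real.one_le_exp (by norm_num)
    have key : ((k:ℝ)+1)^k ≤ Real.exp 1 * (k:ℝ)^k := by
      rcases Nat.eq_zero_or_pos k with h0 | hk
      · subst h0; simpa using hE
      · have hk0 : (0:ℝ) < k := by exact_mod_cast hk
        have h1 : (1 + 1/(k:ℝ)) ≤ Real.exp (1/(k:ℝ)) := by
          have := Real.add_one_le_exp (1/(k:ℝ)); linarith
        have h2 : ((k:ℝ)+1)^k = (k:ℝ)^k * (1 + 1/(k:ℝ))^k := by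
          rw [← mul_pow]; congr 1; field_simp
        have h3 : (1 + 1/(k:ℝ))^k ≤ Real.exp (1/(k:ℝ)) ^ k := by
          apply pow_le_pow_left₀ (by positivity) h1
        have h4 : Real.exp (1/(k:ℝ)) ^ k = Real.exp 1 := by
          rw [← Real.exp_nat_mul]
          congr 1; field_simp
        rw [h2]
        calc (k:ℝ)^k * (1 + 1/(k:ℝ))^k ≤ (k:ℝ)^k * Real.exp 1 := by
              rw [← h4] at *; exact mul_le_mul_of_nonneg_left h3 (by positivity)
          _ = Real.exp 1 * (k:ℝ)^k := by ring
    have hcast : ((k+1:ℕ):ℝ) = (k:ℝ)+1 := by push_cast; ring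
    calc ((k+1:ℕ):ℝ)^(k+1) = ((k:ℝ)+1) * ((k:ℝ)+1)^k := by rw [hcast]; ring
      _ ≤ ((k:ℝ)+1) * (Real.exp 1 * (k:ℝ)^k) := by
          apply mul_le_mul_of_nonneg_left key (by positivity)
      _ ≤ ((k:ℝ)+1) * (Real.exp 1 * (Real.exp 1 ^ k * k.factorial)) := by
          have : Real.exp 1 * (k:ℝ)^k ≤ Real.exp 1 * (Real.exp 1 ^ k * k.factorial) :=
            mul_le_mul_of_nonneg_left ih (by positivity)
          exact mul_le_mul_of_nonneg_left this (by positivity)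
      _ = Real.exp 1 ^ (k+1) * ((k+1) * k.factorial) := by ring
      _ = Real.exp 1 ^ (k+1) * (k+1).factorial := by
          rw [Nat.factorial_succ]; push_cast; ring

lemma choose_mul_le (n s : ℕ) : (n.choose s : ℝ) * (s:ℝ)^s ≤ Real.exp 1 ^ s * (n:ℝ)^s := by
  have h1 : (n.choose s : ℝ) * s.factorial ≤ (n:ℝ)^s := by
    have h0 : n.choose s * s.factorial ≤ n ^ s := by
      rw [mul_comm, ← Nat.descFactorial_eq_factorial_mul_choose]
      exact Nat.descFactorial_le_pow n s
    exact_mod_cast h0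
  calc (n.choose s : ℝ) * (s:ℝ)^s ≤ (n.choose s : ℝ) * (Real.exp 1 ^ s * s.factorial) :=
        mul_le_mul_of_nonneg_left (pow_self_le s) (by positivity)
    _ = Real.exp 1 ^ s * ((n.choose s : ℝ) * s.factorial) := by ring
    _ ≤ Real.exp 1 ^ s * (n:ℝ)^s := mul_le_mul_of_nonneg_left h1 (by positivity)



lemma card_E (n m d : ℕ) (S : Finset (Fin n)) (T : Finset (Fin m)) :
    (Fintype.piFinset (fun v : Fin n => if v ∈ S then Fintype.piFinset (fun _ : Fin d => T)
        else (Finset.univ : Finset (Fin d → Fin m)))).card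
      = (T.card ^ d) ^ S.card * (m ^ d) ^ (n - S.card) := by
  classical
  rw [Fintype.card_piFinset]
  have h1 : ∀ v : Fin n, (if v ∈ S then Fintype.piFinset (fun _ : Fin d => T)
      else (Finset.univ : Finset (Fin d → Fin m))).card = if v ∈ S then T.card ^ d else m ^ d := by
    intro v; split_ifs with h
    · simp [Fintype.card_piFinset]
    · simp [Finset.card_univ]
  rw [Finset.prod_congr rfl (fun v _ => h1 v), Finset.prod_ite, Finset.prod_const,
    Finset.prod_const]
  have h2 : Finset.univ.filter (fun v => v ∈ S) = S := by ext v; simp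
  have h3 : Finset.univ.filter (fun v => v ∉ S) = Sᶜ := by ext v; simp
  rw [h2, h3, Finset.card_compl, Fintype.card_fin]

lemma geom_sum_lt' (n : ℕ) : ∑ s ∈ Finset.Icc 1 n, ((1:ℝ)/2)^s ≤ 1 - (1/2)^n := by
  induction n with
  | zero => simp
  | succ k ih =>
    rw [Finset.sum_Icc_succ_top (by omega)]
    have : ((1:ℝ)/2)^(k+1) = (1/2)^k * (1/2) := by ring
    rw [this]; linarith


lemma term_bound (n m d s t q : ℕ) (hs : 1 ≤ s) (ht : 1 ≤ t) (htq : t + q = d*s)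
    (hq : 2*s ≤ q) (hdsm : ((d*s : ℕ):ℝ) ≤ (m:ℝ)) (hm : 0 < m)
    (h6 : Real.exp 1 ^ (d+1) * (d:ℝ)^2 * (s:ℝ) * (n:ℝ) ≤ 1/2 * (m:ℝ)^2) :
    (n.choose s : ℝ) * (m.choose t : ℝ) * (t:ℝ)^(d*s) ≤ (1/2)^s * (m:ℝ)^(d*s) := by
  set E := Real.exp 1 with hEdef
  have hE : (1:ℝ) ≤ E := Real.one_le_exp (by norm_num)
  have hE0 : (0:ℝ) < E := lt_of_lt_of_le one_pos hE
  have hs0 : (0:ℝ) < (s:ℝ) := by exact_mod_cast hs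
  have ht0 : (0:ℝ) < (t:ℝ) := by exact_mod_cast ht
  have hm0 : (0:ℝ) < (m:ℝ) := by exact_mod_cast hm
  have htds : t ≤ d*s := by omega
  have hA := choose_mul_le n s
  have hB := choose_mul_le m t
  have hApos : (0:ℝ) ≤ (n.choose s : ℝ) := by positivity
  have hBpos : (0:ℝ) ≤ (m.choose t : ℝ) := by positivity
  -- base inequality
  have hbase : E * (n:ℝ) * E^d * (((d*s : ℕ):ℝ))^2 ≤ (1/2) * (m:ℝ)^2 * (s:ℝ) := by
    have h7 := mul_le_mul_of_nonneg_right h6 (le_of_lt hs0)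
    push_cast
    have e : E * (n:ℝ) * E^d * ((d:ℝ)*(s:ℝ))^2 = E^(d+1) * (d:ℝ)^2 * (s:ℝ) * (n:ℝ) * (s:ℝ) := by ring
    linarith [h7, e.le, e.ge]
  have claim : E^s * (n:ℝ)^s * E^(d*s) * (((d*s:ℕ):ℝ))^(2*s)
      ≤ (1/2)^s * (m:ℝ)^(2*s) * (s:ℝ)^s := by
    calc E^s * (n:ℝ)^s * E^(d*s) * (((d*s:ℕ):ℝ))^(2*s)
        = (E * (n:ℝ) * E^d * (((d*s:ℕ):ℝ))^2)^s := by
          rw [mul_pow, mul_pow, mul_pow, ← pow_mul, ← pow_mul]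
      _ ≤ ((1/2) * (m:ℝ)^2 * (s:ℝ))^s := by
          apply pow_le_pow_left₀ (by positivity) hbase
      _ = (1/2)^s * (m:ℝ)^(2*s) * (s:ℝ)^s := by
          rw [mul_pow, mul_pow, ← pow_mul]
  -- S3
  have S3 : E^s * (n:ℝ)^s * E^t * (t:ℝ)^q ≤ (1/2)^s * (m:ℝ)^q * (s:ℝ)^s := by
    have e1 : ((d*s:ℕ):ℝ)^q = ((d*s:ℕ):ℝ)^(2*s) * ((d*s:ℕ):ℝ)^(q-2*s) := by
      rw [← pow_add]; congr 1; omega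
    have e2 : (m:ℝ)^(2*s) * (m:ℝ)^(q-2*s) = (m:ℝ)^q := by
      rw [← pow_add]; congr 1; omega
    calc E^s * (n:ℝ)^s * E^t * (t:ℝ)^q
        ≤ E^s * (n:ℝ)^s * E^(d*s) * ((d*s:ℕ):ℝ)^q := by
          gcongr
      _ = (E^s * (n:ℝ)^s * E^(d*s) * ((d*s:ℕ):ℝ)^(2*s)) * ((d*s:ℕ):ℝ)^(q-2*s) := by
          rw [e1]; ring
      _ ≤ (E^s * (n:ℝ)^s * E^(d*s) * ((d*s:ℕ):ℝ)^(2*s)) * (m:ℝ)^(q-2*s) := by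
          gcongr
      _ ≤ ((1/2)^s * (m:ℝ)^(2*s) * (s:ℝ)^s) * (m:ℝ)^(q-2*s) := by
          apply mul_le_mul_of_nonneg_right claim (by positivity)
      _ = (1/2)^s * (m:ℝ)^q * (s:ℝ)^s := by rw [← e2]; ring
  -- now assemble
  rw [← mul_le_mul_iff_of_pos_right (show (0:ℝ) < (s:ℝ)^s * (t:ℝ)^t by positivity)]
  have et : (t:ℝ)^(d*s) = (t:ℝ)^t * (t:ℝ)^q := by rw [← pow_add]; congr 1; omega
  have em : (m:ℝ)^(d*s) = (m:ℝ)^t * (m:ℝ)^q := by rw [← pow_add]; congr 1; omega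
  calc (n.choose s : ℝ) * (m.choose t : ℝ) * (t:ℝ)^(d*s) * ((s:ℝ)^s * (t:ℝ)^t)
      = ((n.choose s : ℝ) * (s:ℝ)^s) * ((m.choose t : ℝ) * (t:ℝ)^t) * (t:ℝ)^(d*s) := by ring
    _ ≤ (E^s * (n:ℝ)^s) * (E^t * (m:ℝ)^t) * (t:ℝ)^(d*s) := by
        apply mul_le_mul_of_nonneg_right _ (by positivity)
        apply mul_le_mul hA hB (by positivity) (by positivity)
    _ = (E^s * (n:ℝ)^s * E^t * (t:ℝ)^q) * ((m:ℝ)^t * (t:ℝ)^t) := by rw [et]; ring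
    _ ≤ ((1/2)^s * (m:ℝ)^q * (s:ℝ)^s) * ((m:ℝ)^t * (t:ℝ)^t) := by
        apply mul_le_mul_of_nonneg_right S3 (by positivity)
    _ = (1/2)^s * (m:ℝ)^(d*s) * ((s:ℝ)^s * (t:ℝ)^t) := by rw [em]; ring



def nbhd {n d m : ℕ} (f : Fin n → Fin d → Fin m) (S : Finset (Fin n)) : Finset (Fin m) :=
  S.biUnion (fun v => Finset.image (f v) Finset.univ)

def EvSet {n m : ℕ} (d : ℕ) (S : Finset (Fin n)) (T : Finset (Fin m)) :
    Finset (Fin n → Fin d → Fin m) :=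
  Fintype.piFinset (fun v => if v ∈ S then Fintype.piFinset (fun _ : Fin d => T)
    else Finset.univ)

lemma mem_EvSet {n m d : ℕ} (f : Fin n → Fin d → Fin m) (S : Finset (Fin n))
    (T : Finset (Fin m)) : f ∈ EvSet d S T ↔ ∀ v ∈ S, ∀ i, f v i ∈ T := by
  rw [EvSet, Fintype.mem_piFinset]
  constructor
  · intro h v hv i
    have hv2 := h v
    rw [if_pos hv, Fintype.mem_piFinset] at hv2
    exact hv2 i
  · intro h v
    by_cases hv : v ∈ S
    · rw [if_pos hv, Fintype.mem_piFinset]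
      exact h v hv
    · rw [if_neg hv]; exact Finset.mem_univ _

lemma card_EvSet (n m d : ℕ) (S : Finset (Fin n)) (T : Finset (Fin m)) :
    (EvSet d S T).card = (T.card ^ d) ^ S.card * (m ^ d) ^ (n - S.card) := by
  classical
  rw [EvSet, Fintype.card_piFinset]
  have h1 : ∀ v : Fin n, (if v ∈ S then Fintype.piFinset (fun _ : Fin d => T)
      else (Finset.univ : Finset (Fin d → Fin m))).card = if v ∈ S then T.card ^ d else m ^ d := by
    intro v; split_ifs with h
    · simp [Fintype.card_piFinset]
    · simp [Finset.card_univ]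
  rw [Finset.prod_congr rfl (fun v _ => h1 v), Finset.prod_ite, Finset.prod_const,
    Finset.prod_const]
  have h2 : Finset.univ.filter (fun v => v ∈ S) = S := by ext v; simp
  have h3 : Finset.univ.filter (fun v => v ∉ S) = Sᶜ := by ext v; simp
  rw [h2, h3, Finset.card_compl, Fintype.card_fin]

set_option maxHeartbeats 2000000 in
lemma exists_good (β ε α : ℝ) (d n m : ℕ) (hε0 : 0 < ε) (hε : ε < 1/2)
    (hβ0 : 0 < β) (hβ1 : β ≤ 1) (hα0 : 0 < α)
    (hd4 : (4:ℝ) ≤ (d:ℝ)) (hεd : 2 ≤ ε * (d:ℝ))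
    (hdα : (d:ℝ) * α ≤ β)
    (hkey : Real.exp 1 ^ (d+1) * (d:ℝ)^2 * α = β^2/2)
    (hn0 : (0:ℝ) < (n:ℝ)) (hm0 : 0 < m) (hmeq : (m : ℝ) = β * n) :
    ∃ f : Fin n → Fin d → Fin m,
      ∀ S : Finset (Fin n), (S.card : ℝ) ≤ α * n →
        (1 - ε) * d * S.card ≤ ((nbhd f S).card : ℝ) := by
  classical
  have h1e : (0:ℝ) < 1 - ε := by linarith
  have hd0 : (0:ℝ) < (d:ℝ) := by linarith
  have hm0' : (0:ℝ) < (m:ℝ) := by exact_mod_cast hm0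
  set t : ℕ → ℕ := fun s => ⌊(1-ε)*(d:ℝ)*(s:ℕ)⌋₊ with htdef
  by_contra hbad
  push_neg at hbad
  have hall : ∀ f : Fin n → Fin d → Fin m, ∃ S : Finset (Fin n),
      (S.card:ℝ) ≤ α*n ∧ ((nbhd f S).card : ℝ) < (1-ε)*d*S.card := by
    intro f
    exact hbad f
  -- the covering family
  set I : Finset ℕ := (Finset.Icc 1 n).filter (fun s => (s:ℝ) ≤ α*n) with hI
  have cover : (Finset.univ : Finset (Fin n → Fin d → Fin m)) ⊆
      I.biUnion (fun s => ((Finset.univ : Finset (Fin n)).powersetCard s).biUnion (fun S =>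
        ((Finset.univ : Finset (Fin m)).powersetCard (t s)).biUnion (fun T => EvSet d S T))) := by
    intro f _
    obtain ⟨S, hS1, hS2⟩ := hall f
    have hScard1 : 1 ≤ S.card := by
      rcases Nat.eq_zero_or_pos S.card with h0 | h; swap; · exact h
      exfalso
      have hz : ((S.card : ℕ):ℝ) = 0 := by rw [h0]; norm_num
      rw [hz] at hS2
      have h5 : (0:ℝ) ≤ ((nbhd f S).card : ℝ) := Nat.cast_nonneg _
      nlinarith
    have hScn : S.card ≤ n := le_trans (Finset.card_le_univ S) (by simp)
    have hfloor : ((t S.card : ℕ):ℝ) ≤ (1-ε)*(d:ℝ)*S.card :=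
      Nat.floor_le (mul_nonneg (mul_nonneg h1e.le hd0.le) (Nat.cast_nonneg _))
    have hts_le_m : t S.card ≤ m := by
      have h2 : (1-ε)*(d:ℝ)*S.card ≤ (d:ℝ)*S.card := by
        nlinarith [mul_nonneg (mul_nonneg hε0.le hd0.le) (Nat.cast_nonneg (α := ℝ) S.card)]
      have h3 : (d:ℝ)*S.card ≤ (d:ℝ)*(α*n) := mul_le_mul_of_nonneg_left hS1 hd0.le
      have h4 : (d:ℝ)*(α*n) ≤ β*n := by
        have hcℝ := mul_le_mul_of_nonneg_right hdα hn0.le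
        nlinarith [hcℝ]
      have h5 : ((t S.card : ℕ):ℝ) ≤ (m:ℝ) := by rw [hmeq]; linarith
      exact_mod_cast h5
    have hNsub : (nbhd f S).card ≤ t S.card := Nat.le_floor (le_of_lt hS2)
    obtain ⟨T, hNT, -, hTcard⟩ := Finset.exists_subsuperset_card_eq
      (Finset.subset_univ (nbhd f S)) hNsub (by simpa using hts_le_m)
    refine Finset.mem_biUnion.2 ⟨S.card, ?_, Finset.mem_biUnion.2 ⟨S, ?_,
      Finset.mem_biUnion.2 ⟨T, ?_, ?_⟩⟩⟩
    · rw [hI]; exact Finset.mem_filter.2 ⟨Finset.mem_Icc.2 ⟨hScard1, hScn⟩, hS1⟩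
    · exact Finset.mem_powersetCard.2 ⟨Finset.subset_univ _, rfl⟩
    · exact Finset.mem_powersetCard.2 ⟨Finset.subset_univ _, hTcard⟩
    · rw [mem_EvSet]
      intro v hv i
      exact hNT (Finset.mem_biUnion.2 ⟨v, hv, Finset.mem_image.2 ⟨i, Finset.mem_univ _, rfl⟩⟩)
  -- cardinality bound (natural numbers)
  have hcard1 : ((Finset.univ : Finset (Fin n → Fin d → Fin m))).card ≤
      ∑ s ∈ I, n.choose s * (m.choose (t s) * (((t s)^d)^s * (m^d)^(n-s))) := by
    calc ((Finset.univ : Finset (Fin n → Fin d → Fin m))).card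
        ≤ (I.biUnion (fun s => ((Finset.univ : Finset (Fin n)).powersetCard s).biUnion (fun S =>
            ((Finset.univ : Finset (Fin m)).powersetCard (t s)).biUnion
              (fun T => EvSet d S T)))).card := Finset.card_le_card cover
      _ ≤ ∑ s ∈ I, (((Finset.univ : Finset (Fin n)).powersetCard s).biUnion (fun S =>
            ((Finset.univ : Finset (Fin m)).powersetCard (t s)).biUnion
              (fun T => EvSet d S T))).card := Finset.card_biUnion_le
      _ ≤ ∑ s ∈ I, n.choose s * (m.choose (t s) * (((t s)^d)^s * (m^d)^(n-s))) := by
          apply Finset.sum_le_sum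
          intro s hs
          calc (((Finset.univ : Finset (Fin n)).powersetCard s).biUnion (fun S =>
                ((Finset.univ : Finset (Fin m)).powersetCard (t s)).biUnion
                  (fun T => EvSet d S T))).card
              ≤ ∑ S ∈ (Finset.univ : Finset (Fin n)).powersetCard s,
                  (((Finset.univ : Finset (Fin m)).powersetCard (t s)).biUnion
                    (fun T => EvSet d S T)).card := Finset.card_biUnion_le
            _ ≤ ∑ S ∈ (Finset.univ : Finset (Fin n)).powersetCard s,
                  (m.choose (t s) * (((t s)^d)^s * (m^d)^(n-s))) := by
                apply Finset.sum_le_sum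
                intro S hS
                have hScard : S.card = s := (Finset.mem_powersetCard.1 hS).2
                calc (((Finset.univ : Finset (Fin m)).powersetCard (t s)).biUnion
                      (fun T => EvSet d S T)).card
                    ≤ ∑ T ∈ (Finset.univ : Finset (Fin m)).powersetCard (t s),
                        (EvSet d S T).card := Finset.card_biUnion_le
                  _ = ∑ T ∈ (Finset.univ : Finset (Fin m)).powersetCard (t s),
                        (((t s)^d)^s * (m^d)^(n-s)) := by
                      apply Finset.sum_congr rfl
                      intro T hT
                      have hTcard : T.card = t s := (Finset.mem_powersetCard.1 hT).2
                      rw [card_EvSet n m d S T, hTcard, hScard]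
                  _ = m.choose (t s) * (((t s)^d)^s * (m^d)^(n-s)) := by
                      rw [Finset.sum_const, Finset.card_powersetCard, Finset.card_univ,
                        Fintype.card_fin, smul_eq_mul]
            _ = n.choose s * (m.choose (t s) * (((t s)^d)^s * (m^d)^(n-s))) := by
                rw [Finset.sum_const, Finset.card_powersetCard, Finset.card_univ,
                  Fintype.card_fin, smul_eq_mul]
  -- per-term real bound
  have hterm : ∀ s ∈ I, ((n.choose s : ℝ)) * ((m.choose (t s) : ℝ) *
      ((((t s) : ℝ)^d)^s * (((m:ℝ))^d)^(n-s))) ≤ (1/2:ℝ)^s * ((m:ℝ)^d)^n := by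
    intro s hsI
    clear hcard1 cover hbad
    rw [hI, Finset.mem_filter, Finset.mem_Icc] at hsI
    obtain ⟨⟨hs1, hsn⟩, hsα⟩ := hsI
    have hs1' : (1:ℝ) ≤ (s:ℝ) := by exact_mod_cast hs1
    have hfloor : ((t s : ℕ):ℝ) ≤ (1-ε)*(d:ℝ)*s :=
      Nat.floor_le (mul_nonneg (mul_nonneg h1e.le hd0.le) (Nat.cast_nonneg _))
    have hts1 : 1 ≤ t s := by
      apply Nat.le_floor
      push_cast
      have ha : (2:ℝ) ≤ (1-ε)*(d:ℝ) := by nlinarith [hd4, hε]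
      have hb := mul_le_mul ha hs1' zero_le_one (by linarith : (0:ℝ) ≤ (1-ε)*(d:ℝ))
      linarith
    have htsds : t s ≤ d*s := by
      have h2 : (1-ε)*(d:ℝ)*s ≤ (d:ℝ)*s := by
        nlinarith [mul_nonneg (mul_nonneg hε0.le hd0.le) (Nat.cast_nonneg (α := ℝ) s)]
      have h5 : ((t s : ℕ):ℝ) ≤ ((d*s : ℕ):ℝ) := by push_cast; linarith
      exact_mod_cast h5
    have htq : t s + (d*s - t s) = d*s := by omega
    have hq2 : 2*s ≤ d*s - t s := by
      have hc : ((d*s - t s : ℕ):ℝ) = ((d*s:ℕ):ℝ) - ((t s:ℕ):ℝ) := Nat.cast_sub htsds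
      have h2 : (2:ℝ)*s ≤ ((d*s - t s : ℕ):ℝ) := by
        rw [hc]; push_cast
        have hb := mul_le_mul_of_nonneg_right hεd (by linarith : (0:ℝ) ≤ (s:ℝ))
        linarith
      exact_mod_cast h2
    have hdsm : ((d*s:ℕ):ℝ) ≤ (m:ℝ) := by
      push_cast
      rw [hmeq]
      have hb := mul_le_mul_of_nonneg_left hsα hd0.le
      have hcℝ := mul_le_mul_of_nonneg_right hdα hn0.le
      nlinarith [hb, hcℝ]
    have h6 : Real.exp 1^(d+1) * (d:ℝ)^2 * (s:ℝ) * (n:ℝ) ≤ 1/2 * (m:ℝ)^2 := by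
      rw [hmeq]
      have hEd2 : (0:ℝ) ≤ Real.exp 1^(d+1) * (d:ℝ)^2 := by positivity
      have h7 := mul_le_mul_of_nonneg_right (mul_le_mul_of_nonneg_left hsα hEd2) hn0.le
      have h8 : Real.exp 1^(d+1)*(d:ℝ)^2*(α*n)*n = 1/2*(β*n)^2 := by
        linear_combination (n:ℝ)^2 * hkey
      linarith
    have tb := term_bound n m d s (t s) (d*s - t s) hs1 hts1 htq hq2 hdsm hm0 h6
    have hexp : d*s + d*(n-s) = d*n := by
      rw [← Nat.mul_add, Nat.add_sub_cancel' hsn]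
    calc ((n.choose s : ℝ)) * ((m.choose (t s) : ℝ) * ((((t s) : ℝ)^d)^s * (((m:ℝ))^d)^(n-s)))
        = ((n.choose s : ℝ) * (m.choose (t s) : ℝ) * ((t s : ℕ):ℝ)^(d*s)) * ((m:ℝ))^(d*(n-s)) := by
          rw [← pow_mul, ← pow_mul]; ring
      _ ≤ ((1/2:ℝ)^s * (m:ℝ)^(d*s)) * ((m:ℝ))^(d*(n-s)) :=
          mul_le_mul_of_nonneg_right tb (by positivity)
      _ = (1/2:ℝ)^s * ((m:ℝ)^d)^n := by
          rw [mul_assoc, ← pow_add, hexp, pow_mul]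
  have hreal : ((((Finset.univ : Finset (Fin n → Fin d → Fin m))).card : ℕ) : ℝ) ≤
      ∑ s ∈ I, (1/2:ℝ)^s * ((m:ℝ)^d)^n := by
    calc ((((Finset.univ : Finset (Fin n → Fin d → Fin m))).card : ℕ) : ℝ)
        ≤ ((∑ s ∈ I, n.choose s * (m.choose (t s) * (((t s)^d)^s * (m^d)^(n-s))) : ℕ) : ℝ) := by
          exact_mod_cast hcard1
      _ = ∑ s ∈ I, ((n.choose s : ℝ)) * ((m.choose (t s) : ℝ) *
            ((((t s) : ℝ)^d)^s * (((m:ℝ))^d)^(n-s))) := by push_cast; rfl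
      _ ≤ ∑ s ∈ I, (1/2:ℝ)^s * ((m:ℝ)^d)^n := Finset.sum_le_sum hterm
  have hMpos : (0:ℝ) < ((m:ℝ)^d)^n := by positivity
  have hgeom : ∑ s ∈ I, (1/2:ℝ)^s ≤ 1 - (1/2)^n := by
    refine le_trans (Finset.sum_le_sum_of_subset_of_nonneg (Finset.filter_subset _ _)
      (fun i _ _ => by positivity)) (geom_sum_lt' n)
  have hfin : ((((Finset.univ : Finset (Fin n → Fin d → Fin m))).card : ℕ) : ℝ) <
      ((m:ℝ)^d)^n := by
    have e1 : ∑ s ∈ I, (1/2:ℝ)^s * ((m:ℝ)^d)^n = (∑ s ∈ I, (1/2:ℝ)^s) * ((m:ℝ)^d)^n := by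
      rw [← Finset.sum_mul]
    have h2n : (0:ℝ) < (1/2:ℝ)^n := by positivity
    calc ((((Finset.univ : Finset (Fin n → Fin d → Fin m))).card : ℕ) : ℝ)
        ≤ (∑ s ∈ I, (1/2:ℝ)^s) * ((m:ℝ)^d)^n := by rw [← e1]; exact hreal
      _ ≤ (1 - (1/2)^n) * ((m:ℝ)^d)^n := mul_le_mul_of_nonneg_right hgeom hMpos.le
      _ < ((m:ℝ)^d)^n := by nlinarith [mul_pos h2n hMpos]
  have hcards : ((Finset.univ : Finset (Fin n → Fin d → Fin m))).card = (m^d)^n := by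
    rw [Finset.card_univ]
    simp [Fintype.card_fun]
  rw [hcards] at hfin
  push_cast at hfin
  exact lt_irrefl _ hfin

theorem stmt9 (β ε : ℝ) (hβ0 : 0 < β) (hβ1 : β ≤ 1) (hε0 : 0 < ε) (hε : ε < 1 / 2) :
    ∃ (d n₀ : ℕ) (α : ℝ), 0 < d ∧ 0 < n₀ ∧ 0 < α ∧
      ∀ n : ℕ, n₀ ≤ n → ∀ m : ℕ, (m : ℝ) = β * n →
        ∃ f : Fin n → Fin d → Fin m,
          ∀ S : Finset (Fin n), (S.card : ℝ) ≤ α * n →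
            (1 - ε) * d * S.card ≤
              ((S.biUnion (fun v => Finset.image (f v) Finset.univ)).card : ℝ) := by
  have hE : (1:ℝ) ≤ Real.exp 1 := Real.one_le_exp (by norm_num)
  obtain ⟨d, hd4, hεd⟩ : ∃ d : ℕ, 4 ≤ d ∧ 2 ≤ ε * (d:ℝ) := by
    refine ⟨⌈(2:ℝ)/ε⌉₊, ?_, ?_⟩
    · have h1 : (4:ℝ) < 2/ε := by rw [lt_div_iff₀ hε0]; linarith
      have h2 : (2:ℝ)/ε ≤ (⌈(2:ℝ)/ε⌉₊ : ℝ) := Nat.le_ceil _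
      have h3 : (4:ℝ) < (⌈(2:ℝ)/ε⌉₊ : ℝ) := lt_of_lt_of_le h1 h2
      exact_mod_cast h3.le
    · have h2 : (2:ℝ)/ε ≤ (⌈(2:ℝ)/ε⌉₊ : ℝ) := Nat.le_ceil _
      calc (2:ℝ) = ε * (2/ε) := by field_simp
        _ ≤ ε * (⌈(2:ℝ)/ε⌉₊ : ℝ) := mul_le_mul_of_nonneg_left h2 hε0.le
  have hd4' : (4:ℝ) ≤ (d:ℝ) := by exact_mod_cast hd4
  have hd0 : (0:ℝ) < (d:ℝ) := by linarith
  have hdn0 : 0 < d := by omega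
  set α := β^2 / (2 * Real.exp 1^(d+1) * (d:ℝ)^2) with hα
  have hE0 : (0:ℝ) < Real.exp 1 := Real.exp_pos 1
  have hα0 : 0 < α := by rw [hα]; positivity
  have hkey : Real.exp 1^(d+1) * (d:ℝ)^2 * α = β^2/2 := by
    rw [hα]; field_simp
  have hE1 : (1:ℝ) ≤ Real.exp 1^(d+1) := one_le_pow₀ hE
  have hdα : (d:ℝ) * α ≤ β := by
    have h1 : (d:ℝ)*α*(2*Real.exp 1^(d+1)*(d:ℝ)) = β^2 := by linear_combination 2 * hkey
    have h2 : (1:ℝ) ≤ 2*Real.exp 1^(d+1)*(d:ℝ) := by nlinarith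
    have h3 : (d:ℝ)*α ≤ β^2 := by
      nlinarith [mul_nonneg (mul_nonneg hd0.le hα0.le)
        (by linarith : (0:ℝ) ≤ 2*Real.exp 1^(d+1)*(d:ℝ) - 1)]
    nlinarith
  refine ⟨d, 1, α, hdn0, one_pos, hα0, ?_⟩
  intro n hn m hmeq
  have hn0 : (0:ℝ) < (n:ℝ) := by exact_mod_cast hn
  have hm0 : 0 < m := by
    have : (0:ℝ) < (m:ℝ) := by rw [hmeq]; positivity
    exact_mod_cast this
  obtain ⟨f, hf⟩ := exists_good β ε α d n m hε0 hε hβ0 hβ1 hα0 hd4' hεd hdα hkey hn0 hm0 hmeq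
  exact ⟨f, fun S hS => hf S hS⟩
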